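/- In the n-projective model structure on Ch(R), a chain map is a weak equivalence if and only if it is a quasi-isomorphism. More precisely: in an abelian model structure on Ch(R) whose trivial objects are exactly the exact complexes, a map f factoring as a trivial fibration after a trivial cofibration induces an isomorphism on all homology groups, and conversely every quasi-isomorphism is such a composite. -/
import Mathlib


open CategoryTheory Limits

variable (R : Type) [Ring R]

/-- `f` is a trivial cofibration for an abelian model structure on `Ch(R)` with class of
cofibrant objects `𝒞` and exact complexes as trivial objects: a monomorphism whose
cokernel is cofibrant and exact. -/
def IsTrivialCofibration (𝒞 : ChainComplex (ModuleCat R) ℤ → Prop)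
    {X Y : ChainComplex (ModuleCat R) ℤ} (f : X ⟶ Y) : Prop :=
  Mono f ∧ (∀ k : ℤ, (cokernel f).ExactAt k) ∧ 𝒞 (cokernel f)

/-- `f` is a fibration: an epimorphism whose kernel is fibrant (`ℱ`). -/
def IsFibration (ℱ : ChainComplex (ModuleCat R) ℤ → Prop)
    {X Y : ChainComplex (ModuleCat R) ℤ} (f : X ⟶ Y) : Prop :=
  Epi f ∧ ℱ (kernel f)

/-- `f` is a trivial fibration: an epimorphism whose kernel is fibrant and exact. -/
def IsTrivialFibration (ℱ : ChainComplex (ModuleCat R) ℤ → Prop)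
    {X Y : ChainComplex (ModuleCat R) ℤ} (f : X ⟶ Y) : Prop :=
  Epi f ∧ (∀ k : ℤ, (kernel f).ExactAt k) ∧ ℱ (kernel f)

section Aux

variable {C : Type*} [Category C] [Abelian C]

lemma aux_quasiIso_g {S : ShortComplex (ChainComplex C ℤ)} (hS : S.ShortExact)
    (h1 : ∀ k : ℤ, S.X₁.ExactAt k) : QuasiIso S.g := by
  have hz : ∀ k, IsZero (S.X₁.homology k) := fun k =>
    (HomologicalComplex.exactAt_iff_isZero_homology _ k).1 (h1 k)
  refine ⟨fun i => ?_⟩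
  rw [quasiIsoAt_iff_isIso_homologyMap]
  have hrel : (ComplexShape.down ℤ).Rel i (i - 1) := by simp
  have h2 := hS.homology_exact₂ i
  have h3 := hS.homology_exact₃ i (i - 1) hrel
  have hmono : Mono (HomologicalComplex.homologyMap S.g i) :=
    h2.mono_g ((hz i).eq_of_src _ _)
  have hepi : Epi (HomologicalComplex.homologyMap S.g i) :=
    h3.epi_f ((hz (i - 1)).eq_of_tgt _ _)
  exact isIso_of_mono_of_epi _

lemma aux_quasiIso_f {S : ShortComplex (ChainComplex C ℤ)} (hS : S.ShortExact)
    (h3 : ∀ k : ℤ, S.X₃.ExactAt k) : QuasiIso S.f := by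
  have hz : ∀ k, IsZero (S.X₃.homology k) := fun k =>
    (HomologicalComplex.exactAt_iff_isZero_homology _ k).1 (h3 k)
  refine ⟨fun j => ?_⟩
  rw [quasiIsoAt_iff_isIso_homologyMap]
  have hrel : (ComplexShape.down ℤ).Rel (j + 1) j := by simp
  have h1 := hS.homology_exact₁ (j + 1) j hrel
  have h2 := hS.homology_exact₂ j
  have hmono : Mono (HomologicalComplex.homologyMap S.f j) :=
    h1.mono_g ((hz (j + 1)).eq_of_src _ _)
  have hepi : Epi (HomologicalComplex.homologyMap S.f j) :=
    h2.epi_f ((hz j).eq_of_tgt _ _)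
  exact isIso_of_mono_of_epi _

lemma aux_exact_X₁ {S : ShortComplex (ChainComplex C ℤ)} (hS : S.ShortExact)
    (hg : QuasiIso S.g) : ∀ k : ℤ, S.X₁.ExactAt k := by
  intro j
  rw [HomologicalComplex.exactAt_iff_isZero_homology]
  have hrel : (ComplexShape.down ℤ).Rel (j + 1) j := by simp
  have h1 := hS.homology_exact₁ (j + 1) j hrel
  have hgi : IsIso (HomologicalComplex.homologyMap S.g (j + 1)) := by
    have := hg.quasiIsoAt (j + 1)
    rwa [quasiIsoAt_iff_isIso_homologyMap] at this
  have hδ : hS.δ (j + 1) j hrel = 0 := by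
    have := hS.comp_δ (j + 1) j hrel
    rwa [← cancel_epi (HomologicalComplex.homologyMap S.g (j + 1)), comp_zero]
  have hmono : Mono (HomologicalComplex.homologyMap S.f j) := h1.mono_g hδ
  have hgj : IsIso (HomologicalComplex.homologyMap S.g j) := by
    have := hg.quasiIsoAt j
    rwa [quasiIsoAt_iff_isIso_homologyMap] at this
  have hf0 : HomologicalComplex.homologyMap S.f j = 0 := by
    rw [← cancel_mono (HomologicalComplex.homologyMap S.g j), zero_comp,
      ← HomologicalComplex.homologyMap_comp, S.zero, HomologicalComplex.homologyMap_zero]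
  exact IsZero.of_mono_eq_zero _ hf0

/-- The short exact sequence `0 ⟶ X ⟶ W ⟶ coker i ⟶ 0` for a mono `i`. -/
lemma aux_shortExact_cokernel {X W : ChainComplex C ℤ} (i : X ⟶ W) [Mono i] :
    (ShortComplex.mk i (cokernel.π i) (by simp)).ShortExact :=
  { exact := ShortComplex.exact_cokernel i }

/-- The short exact sequence `0 ⟶ ker p ⟶ W ⟶ Y ⟶ 0` for an epi `p`. -/
lemma aux_shortExact_kernel {W Y : ChainComplex C ℤ} (p : W ⟶ Y) [Epi p] :
    (ShortComplex.mk (kernel.ι p) p (by simp)).ShortExact :=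
  { exact := ShortComplex.exact_kernel p }

end Aux

/-- In an abelian model structure on `Ch(R)` whose trivial objects are exactly the exact
complexes (such as the `n`-projective model structure) — with cofibrant objects `𝒞`,
fibrant objects `ℱ`, and in which every map factors as a trivial cofibration followed by
a fibration — the weak equivalences (composites of a trivial cofibration followed by a
trivial fibration) are exactly the quasi-isomorphisms. -/
theorem weakEquiv_iff_quasiIso (𝒞 ℱ : ChainComplex (ModuleCat R) ℤ → Prop)
    (hfact : ∀ {X Y : ChainComplex (ModuleCat R) ℤ} (f : X ⟶ Y),
      ∃ (W : ChainComplex (ModuleCat R) ℤ) (i : X ⟶ W) (p : W ⟶ Y),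
        f = i ≫ p ∧ IsTrivialCofibration R 𝒞 i ∧ IsFibration R ℱ p)
    {X Y : ChainComplex (ModuleCat R) ℤ} (f : X ⟶ Y) :
    QuasiIso f ↔ ∃ (W : ChainComplex (ModuleCat R) ℤ) (i : X ⟶ W) (p : W ⟶ Y),
      f = i ≫ p ∧ IsTrivialCofibration R 𝒞 i ∧ IsTrivialFibration R ℱ p := by
  constructor
  · intro hf
    obtain ⟨W, i, p, hfeq, ⟨hmono, hcokex, hcok𝒞⟩, hepi, hker⟩ := hfact f
    have : Mono i := hmono
    have : Epi p := hepi
    have hqi : QuasiIso i := aux_quasiIso_f (aux_shortExact_cokernel i) hcokex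
    have hqp : QuasiIso p := by
      subst hfeq
      exact quasiIso_of_comp_left i p
    refine ⟨W, i, p, hfeq, ⟨hmono, hcokex, hcok𝒞⟩, hepi, ?_, hker⟩
    exact aux_exact_X₁ (aux_shortExact_kernel p) hqp
  · rintro ⟨W, i, p, hfeq, ⟨hmono, hcokex, _⟩, hepi, hkerex, _⟩
    have : Mono i := hmono
    have : Epi p := hepi
    have hqi : QuasiIso i := aux_quasiIso_f (aux_shortExact_cokernel i) hcokex
    have hqp : QuasiIso p := aux_quasiIso_g (aux_shortExact_kernel p) hkerex
    subst hfeq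
    infer_instance
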